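/- Let X ~ N(γ, σ²) and Y ~ N(Γ, s²) be independent real Gaussian random variables with Γ = γ·β for a fixed real β. Then Var(XY − X²β + σ²β) = (1 + β²σ²/s²)·s²·(γ²/s² + σ²/s²)·s² + σ⁴β² ; equivalently, setting m = γ²/s², v = σ²/s², Var((XY − X²β)/s²)·s⁴/s⁴ gives Var((XY − X²β)s^{-2}) = (1 + β²v)(m + v) + v²β². -/

import Mathlib

open MeasureTheory

open Real Filter Topology ProbabilityTheory
open scoped NNReal ENNReal

lemma J_int {b : ℝ} (hb : 0 < b) (n : ℕ) :
    Integrable (fun x : ℝ => x ^ n * rexp (-b * x ^ 2)) := by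
  have h := integrable_rpow_mul_exp_neg_mul_sq hb (s := (n : ℝ))
    (lt_of_lt_of_le (by norm_num) (Nat.cast_nonneg n))
  simpa [Real.rpow_natCast] using h

lemma J_odd {b : ℝ} (n : ℕ) (hn : Odd n) :
    ∫ x : ℝ, x ^ n * rexp (-b * x ^ 2) = 0 := by
  have A := integral_neg_eq_self (fun x : ℝ => x ^ n * rexp (-b * x ^ 2)) (volume : Measure ℝ)
  simp only [neg_sq, hn.neg_pow, neg_mul, integral_neg] at A
  simp only [neg_mul]
  linarith

lemma J_tendsto {b : ℝ} (hb : 0 < b) (n : ℕ) (l : Filter ℝ) (hl : l ≤ Filter.cocompact ℝ) :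
    Tendsto (fun x : ℝ => x ^ n * rexp (-b * x ^ 2)) l (𝓝 0) := by
  have h := tendsto_rpow_abs_mul_exp_neg_mul_sq_cocompact hb (n : ℝ)
  refine squeeze_zero_norm (fun x => ?_) (h.mono_left hl)
  rw [Real.norm_eq_abs, abs_mul, abs_pow, abs_of_nonneg (exp_pos _).le, Real.rpow_natCast]

lemma J2 {b : ℝ} (hb : 0 < b) :
    ∫ x : ℝ, x ^ 2 * rexp (-b * x ^ 2) = √(π / b) / (2 * b) := by
  have hder : ∀ x : ℝ, HasDerivAt (fun x : ℝ => x * rexp (-b * x ^ 2))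
      (rexp (-b * x ^ 2) - 2 * b * (x ^ 2 * rexp (-b * x ^ 2))) x := by
    intro x
    have h1 : HasDerivAt (fun x : ℝ => -b * x ^ 2) (-b * (2 * x)) x := by
      simpa using ((hasDerivAt_pow 2 x).const_mul (-b))
    have h3 : HasDerivAt (fun x : ℝ => x * rexp (-b * x ^ 2))
        (1 * rexp (-b * x ^ 2) + x * (rexp (-b * x ^ 2) * (-b * (2 * x)))) x :=
      (hasDerivAt_id x).mul h1.exp
    convert h3 using 1
    simp only [id_eq, one_mul]
    ring
  have e0 : Integrable (fun x : ℝ => rexp (-b * x ^ 2)) := by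
    simpa using J_int hb 0
  have hint : Integrable (fun x : ℝ =>
      rexp (-b * x ^ 2) - 2 * b * (x ^ 2 * rexp (-b * x ^ 2))) :=
    e0.sub ((J_int hb 2).const_mul _)
  have h0 := integral_of_hasDerivAt_of_tendsto hder hint
    (Filter.Tendsto.congr (fun x => by ring)
      (J_tendsto hb 1 atBot (by rw [cocompact_eq_atBot_atTop]; exact le_sup_left)))
    (Filter.Tendsto.congr (fun x => by ring)
      (J_tendsto hb 1 atTop (by rw [cocompact_eq_atBot_atTop]; exact le_sup_right)))
  rw [integral_sub e0 ((J_int hb 2).const_mul _),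
    integral_const_mul] at h0
  have hg : ∫ x : ℝ, rexp (-b * x ^ 2) = √(π / b) := integral_gaussian b
  rw [hg] at h0
  have hb' : (2 : ℝ) * b ≠ 0 := by positivity
  field_simp at h0 ⊢
  linarith

lemma J4 {b : ℝ} (hb : 0 < b) :
    ∫ x : ℝ, x ^ 4 * rexp (-b * x ^ 2) = 3 * √(π / b) / (4 * b ^ 2) := by
  have hder : ∀ x : ℝ, HasDerivAt (fun x : ℝ => x ^ 3 * rexp (-b * x ^ 2))
      (3 * (x ^ 2 * rexp (-b * x ^ 2)) - 2 * b * (x ^ 4 * rexp (-b * x ^ 2))) x := by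
    intro x
    have h1 : HasDerivAt (fun x : ℝ => -b * x ^ 2) (-b * (2 * x)) x := by
      simpa using ((hasDerivAt_pow 2 x).const_mul (-b))
    have h3 : HasDerivAt (fun x : ℝ => x ^ 3 * rexp (-b * x ^ 2))
        (↑(3:ℕ) * x ^ (3 - 1) * rexp (-b * x ^ 2) + x ^ 3 * (rexp (-b * x ^ 2) * (-b * (2 * x)))) x :=
      (hasDerivAt_pow 3 x).mul h1.exp
    convert h3 using 1
    ring
  have hint : Integrable (fun x : ℝ =>
      3 * (x ^ 2 * rexp (-b * x ^ 2)) - 2 * b * (x ^ 4 * rexp (-b * x ^ 2))) :=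
    ((J_int hb 2).const_mul _).sub ((J_int hb 4).const_mul _)
  have h0 := integral_of_hasDerivAt_of_tendsto hder hint
    (J_tendsto hb 3 atBot (by rw [cocompact_eq_atBot_atTop]; exact le_sup_left))
    (J_tendsto hb 3 atTop (by rw [cocompact_eq_atBot_atTop]; exact le_sup_right))
  rw [integral_sub ((J_int hb 2).const_mul _) ((J_int hb 4).const_mul _),
    integral_const_mul, integral_const_mul, J2 hb] at h0
  have hb' : (2 : ℝ) * b ≠ 0 := by positivity
  field_simp at h0 ⊢
  linarith

lemma gauss_reduce (m : ℝ) {t : ℝ≥0} (ht : t ≠ 0) (g : ℝ → ℝ) :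
    ∫ x, g x ∂(gaussianReal m t)
      = ∫ y : ℝ, (√(2 * π * (t:ℝ)))⁻¹ * (g (y + m) * rexp (-(2 * (t:ℝ))⁻¹ * y ^ 2)) := by
  rw [gaussianReal_of_var_ne_zero m ht]
  have hmeas : Measurable fun x => (gaussianPDFReal m t x).toNNReal :=
    (measurable_gaussianPDFReal m t).real_toNNReal
  have : gaussianPDF m t = fun x => ((gaussianPDFReal m t x).toNNReal : ℝ≥0∞) := rfl
  rw [this, integral_withDensity_eq_integral_smul hmeas]
  have h1 : ∀ x : ℝ, ((gaussianPDFReal m t x).toNNReal : ℝ) • g x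
      = gaussianPDFReal m t x * g x := by
    intro x
    rw [Real.coe_toNNReal _ (gaussianPDFReal_nonneg m t x), smul_eq_mul]
  simp_rw [NNReal.smul_def, h1]
  rw [← integral_add_right_eq_self (fun x => gaussianPDFReal m t x * g x) m]
  congr 1
  funext y
  rw [gaussianPDFReal]
  have : (-(y + m - m) ^ 2 / (2 * (t:ℝ))) = -(2 * (t:ℝ))⁻¹ * y ^ 2 := by
    field_simp
    ring
  rw [this]
  ring


lemma sqrt_fact {t : ℝ≥0} (ht : t ≠ 0) :
    √(π / (2 * (t:ℝ))⁻¹) = √(2 * π * (t:ℝ)) := by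
  have ht' : (0:ℝ) < t := NNReal.coe_pos.mpr (pos_iff_ne_zero.mpr ht)
  congr 1
  field_simp

lemma sqrt_pos' {t : ℝ≥0} (ht : t ≠ 0) : (0:ℝ) < √(2 * π * (t:ℝ)) := by
  have ht' : (0:ℝ) < t := NNReal.coe_pos.mpr (pos_iff_ne_zero.mpr ht)
  have : (0:ℝ) < 2 * π * t := by positivity
  exact Real.sqrt_pos.mpr this

lemma mom1 (m : ℝ) (t : ℝ≥0) : ∫ x, x ∂(gaussianReal m t) = m := by
  by_cases ht : t = 0
  · rw [ht, gaussianReal_zero_var, integral_dirac]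
  · have ht' : (0:ℝ) < t := NNReal.coe_pos.mpr (pos_iff_ne_zero.mpr ht)
    have hb : (0:ℝ) < (2 * (t:ℝ))⁻¹ := by positivity
    set b : ℝ := (2 * (t:ℝ))⁻¹ with hbdef
    rw [gauss_reduce m ht (fun x => x), integral_const_mul]
    have split : (fun y : ℝ => (y + m) * rexp (-b * y ^ 2))
        = fun y => y ^ 1 * rexp (-b * y ^ 2) + m * (rexp (-b * y ^ 2))
         := by funext y; ring
    have e0 : Integrable (fun y : ℝ => rexp (-b * y ^ 2)) := by
      simpa using J_int hb 0
    rw [split, integral_add (J_int hb 1) (e0.const_mul m), integral_const_mul,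
      J_odd 1 odd_one, integral_gaussian, sqrt_fact ht]
    have := (sqrt_pos' ht).ne'
    field_simp
    ring

lemma mom2 (m : ℝ) (t : ℝ≥0) : ∫ x, x ^ 2 ∂(gaussianReal m t) = m ^ 2 + t := by
  by_cases ht : t = 0
  · simp [ht, gaussianReal_zero_var, integral_dirac]
  · have ht' : (0:ℝ) < t := NNReal.coe_pos.mpr (pos_iff_ne_zero.mpr ht)
    have hb : (0:ℝ) < (2 * (t:ℝ))⁻¹ := by positivity
    set b : ℝ := (2 * (t:ℝ))⁻¹ with hbdef
    rw [gauss_reduce m ht (fun x => x ^ 2), integral_const_mul]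
    have split : (fun y : ℝ => (y + m) ^ 2 * rexp (-b * y ^ 2))
        = fun y => y ^ 2 * rexp (-b * y ^ 2)
            + ((2 * m) * (y ^ 1 * rexp (-b * y ^ 2)) + m ^ 2 * rexp (-b * y ^ 2)) := by
      funext y; ring
    have e0 : Integrable (fun y : ℝ => rexp (-b * y ^ 2)) := by
      simpa using J_int hb 0
    have i1 : Integrable (fun y : ℝ => (2 * m) * (y ^ 1 * rexp (-b * y ^ 2))) :=
      (J_int hb 1).const_mul _
    have i0 : Integrable (fun y : ℝ => m ^ 2 * rexp (-b * y ^ 2)) := e0.const_mul _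
    have i10 : Integrable (fun y : ℝ => (2 * m) * (y ^ 1 * rexp (-b * y ^ 2))
        + m ^ 2 * rexp (-b * y ^ 2)) := i1.add i0
    rw [split, integral_add (J_int hb 2) i10, integral_add i1 i0,
      integral_const_mul, integral_const_mul, J_odd 1 odd_one, integral_gaussian,
      J2 hb, sqrt_fact ht]
    have h1 := (sqrt_pos' ht).ne'
    have h2 : (t:ℝ) ≠ 0 := ht'.ne'
    rw [hbdef]
    field_simp
    ring

lemma mom3 (m : ℝ) (t : ℝ≥0) :
    ∫ x, x ^ 3 ∂(gaussianReal m t) = m ^ 3 + 3 * m * t := by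
  by_cases ht : t = 0
  · simp [ht, gaussianReal_zero_var, integral_dirac]
  · have ht' : (0:ℝ) < t := NNReal.coe_pos.mpr (pos_iff_ne_zero.mpr ht)
    have hb : (0:ℝ) < (2 * (t:ℝ))⁻¹ := by positivity
    set b : ℝ := (2 * (t:ℝ))⁻¹ with hbdef
    rw [gauss_reduce m ht (fun x => x ^ 3), integral_const_mul]
    have split : (fun y : ℝ => (y + m) ^ 3 * rexp (-b * y ^ 2))
        = fun y => y ^ 3 * rexp (-b * y ^ 2)
            + ((3 * m) * (y ^ 2 * rexp (-b * y ^ 2))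
              + ((3 * m ^ 2) * (y ^ 1 * rexp (-b * y ^ 2))
                + m ^ 3 * rexp (-b * y ^ 2))) := by
      funext y; ring
    have e0 : Integrable (fun y : ℝ => rexp (-b * y ^ 2)) := by
      simpa using J_int hb 0
    have i2 : Integrable (fun y : ℝ => (3 * m) * (y ^ 2 * rexp (-b * y ^ 2))) :=
      (J_int hb 2).const_mul _
    have i1 : Integrable (fun y : ℝ => (3 * m ^ 2) * (y ^ 1 * rexp (-b * y ^ 2))) :=
      (J_int hb 1).const_mul _
    have i0 : Integrable (fun y : ℝ => m ^ 3 * rexp (-b * y ^ 2)) := e0.const_mul _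
    have i10 : Integrable (fun y : ℝ => (3 * m ^ 2) * (y ^ 1 * rexp (-b * y ^ 2))
        + m ^ 3 * rexp (-b * y ^ 2)) := i1.add i0
    have i210 : Integrable (fun y : ℝ => (3 * m) * (y ^ 2 * rexp (-b * y ^ 2))
        + ((3 * m ^ 2) * (y ^ 1 * rexp (-b * y ^ 2)) + m ^ 3 * rexp (-b * y ^ 2))) :=
      i2.add i10
    rw [split, integral_add (J_int hb 3) i210,
      integral_add i2 i10, integral_add i1 i0,
      integral_const_mul, integral_const_mul, integral_const_mul,
      J_odd 1 odd_one, J_odd 3 (by decide), integral_gaussian, J2 hb, sqrt_fact ht]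
    have h1 := (sqrt_pos' ht).ne'
    have h2 : (t:ℝ) ≠ 0 := ht'.ne'
    rw [hbdef]
    field_simp
    ring

lemma mom4 (m : ℝ) (t : ℝ≥0) :
    ∫ x, x ^ 4 ∂(gaussianReal m t)
      = m ^ 4 + 6 * m ^ 2 * t + 3 * (t:ℝ) ^ 2 := by
  by_cases ht : t = 0
  · simp [ht, gaussianReal_zero_var, integral_dirac]
  · have ht' : (0:ℝ) < t := NNReal.coe_pos.mpr (pos_iff_ne_zero.mpr ht)
    have hb : (0:ℝ) < (2 * (t:ℝ))⁻¹ := by positivity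
    set b : ℝ := (2 * (t:ℝ))⁻¹ with hbdef
    rw [gauss_reduce m ht (fun x => x ^ 4), integral_const_mul]
    have split : (fun y : ℝ => (y + m) ^ 4 * rexp (-b * y ^ 2))
        = fun y => y ^ 4 * rexp (-b * y ^ 2)
            + ((4 * m) * (y ^ 3 * rexp (-b * y ^ 2))
              + ((6 * m ^ 2) * (y ^ 2 * rexp (-b * y ^ 2))
                + ((4 * m ^ 3) * (y ^ 1 * rexp (-b * y ^ 2))
                  + m ^ 4 * rexp (-b * y ^ 2)))) := by
      funext y; ring
    have e0 : Integrable (fun y : ℝ => rexp (-b * y ^ 2)) := by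
      simpa using J_int hb 0
    have i3 : Integrable (fun y : ℝ => (4 * m) * (y ^ 3 * rexp (-b * y ^ 2))) :=
      (J_int hb 3).const_mul _
    have i2 : Integrable (fun y : ℝ => (6 * m ^ 2) * (y ^ 2 * rexp (-b * y ^ 2))) :=
      (J_int hb 2).const_mul _
    have i1 : Integrable (fun y : ℝ => (4 * m ^ 3) * (y ^ 1 * rexp (-b * y ^ 2))) :=
      (J_int hb 1).const_mul _
    have i0 : Integrable (fun y : ℝ => m ^ 4 * rexp (-b * y ^ 2)) := e0.const_mul _
    have i10 : Integrable (fun y : ℝ => (4 * m ^ 3) * (y ^ 1 * rexp (-b * y ^ 2))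
        + m ^ 4 * rexp (-b * y ^ 2)) := i1.add i0
    have i210 : Integrable (fun y : ℝ => (6 * m ^ 2) * (y ^ 2 * rexp (-b * y ^ 2))
        + ((4 * m ^ 3) * (y ^ 1 * rexp (-b * y ^ 2)) + m ^ 4 * rexp (-b * y ^ 2))) :=
      i2.add i10
    have i3210 : Integrable (fun y : ℝ => (4 * m) * (y ^ 3 * rexp (-b * y ^ 2))
        + ((6 * m ^ 2) * (y ^ 2 * rexp (-b * y ^ 2))
          + ((4 * m ^ 3) * (y ^ 1 * rexp (-b * y ^ 2)) + m ^ 4 * rexp (-b * y ^ 2)))) :=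
      i3.add i210
    rw [split, integral_add (J_int hb 4) i3210,
      integral_add i3 i210, integral_add i2 i10,
      integral_add i1 i0,
      integral_const_mul, integral_const_mul, integral_const_mul, integral_const_mul,
      J_odd 1 odd_one, J_odd 3 (by decide), integral_gaussian, J2 hb, J4 hb,
      sqrt_fact ht]
    have h1 := (sqrt_pos' ht).ne'
    have h2 : (t:ℝ) ≠ 0 := ht'.ne'
    rw [hbdef]
    field_simp
    ring

lemma int_pow_gauss (m : ℝ) (t : ℝ≥0) (n : ℕ) :
    Integrable (fun x : ℝ => x ^ n) (gaussianReal m t) := by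
  by_cases ht : t = 0
  · rw [ht, gaussianReal_zero_var]
    refine ⟨(measurable_id.pow_const n).aestronglyMeasurable, ?_⟩
    rw [HasFiniteIntegral, lintegral_dirac]
    exact ENNReal.coe_lt_top
  · have ht' : (0:ℝ) < t := NNReal.coe_pos.mpr (pos_iff_ne_zero.mpr ht)
    have hb : (0:ℝ) < (2 * (t:ℝ))⁻¹ := by positivity
    set b : ℝ := (2 * (t:ℝ))⁻¹ with hbdef
    rw [gaussianReal_of_var_ne_zero m ht]
    have hmeas : Measurable fun x => (gaussianPDFReal m t x).toNNReal :=
      (measurable_gaussianPDFReal m t).real_toNNReal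
    have : gaussianPDF m t = fun x => ((gaussianPDFReal m t x).toNNReal : ℝ≥0∞) := rfl
    rw [this, integrable_withDensity_iff_integrable_smul hmeas]
    have hG : Integrable (fun y : ℝ =>
        (√(2 * π * (t:ℝ)))⁻¹ * ((y + m) ^ n * rexp (-b * y ^ 2))) := by
      have hsum : (fun y : ℝ => (y + m) ^ n * rexp (-b * y ^ 2))
          = fun y => ∑ k ∈ Finset.range (n + 1),
              (m ^ (n - k) * (n.choose k : ℝ)) * (y ^ k * rexp (-b * y ^ 2)) := by
        funext y
        rw [add_pow, Finset.sum_mul]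
        refine Finset.sum_congr rfl fun k _ => by ring
      have : Integrable (fun y : ℝ => (y + m) ^ n * rexp (-b * y ^ 2)) := by
        rw [hsum]
        exact integrable_finset_sum _ fun k _ => (J_int hb k).const_mul _
      exact this.const_mul _
    have hG' : Integrable (fun x : ℝ =>
        (√(2 * π * (t:ℝ)))⁻¹ * (((x - m) + m) ^ n * rexp (-b * (x - m) ^ 2))) :=
      hG.comp_sub_right m
    refine hG'.congr ?_
    filter_upwards with x
    rw [NNReal.smul_def, Real.coe_toNNReal _ (gaussianPDFReal_nonneg m t x), smul_eq_mul,
      gaussianPDFReal]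
    have h2 : (-(x - m) ^ 2 / (2 * (t:ℝ))) = -b * (x - m) ^ 2 := by
      rw [hbdef]; field_simp
    rw [h2]
    ring

/-- For independent X ~ N(γ, σ²) and Y ~ N(Γ, s²) with Γ = γβ, setting
m = γ²/s² and v = σ²/s², one has Var((XY − X²β)·s⁻²) = (1 + β²v)(m + v) + v²β². -/
theorem stmt19 {Ω : Type*} [MeasurableSpace Ω] (μ : Measure Ω) [IsProbabilityMeasure μ]
    (X Y : Ω → ℝ) (hXm : Measurable X) (hYm : Measurable Y)
    (γ β σ s : ℝ) (hs : s ≠ 0)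
    (hX : Measure.map X μ = ProbabilityTheory.gaussianReal γ (Real.toNNReal (σ ^ 2)))
    (hY : Measure.map Y μ = ProbabilityTheory.gaussianReal (γ * β) (Real.toNNReal (s ^ 2)))
    (hindep : ProbabilityTheory.IndepFun X Y μ) :
    ProbabilityTheory.variance (fun ω => (X ω * Y ω - (X ω) ^ 2 * β) / s ^ 2) μ =
      (1 + β ^ 2 * (σ ^ 2 / s ^ 2)) * (γ ^ 2 / s ^ 2 + σ ^ 2 / s ^ 2)
        + (σ ^ 2 / s ^ 2) ^ 2 * β ^ 2 := by
  have hXae : AEMeasurable X μ := hXm.aemeasurable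
  have hYae : AEMeasurable Y μ := hYm.aemeasurable
  have cσ : ((Real.toNNReal (σ ^ 2) : ℝ≥0) : ℝ) = σ ^ 2 :=
    Real.coe_toNNReal _ (sq_nonneg σ)
  have cs : ((Real.toNNReal (s ^ 2) : ℝ≥0) : ℝ) = s ^ 2 :=
    Real.coe_toNNReal _ (sq_nonneg s)
  -- moments of X
  have mX1 : ∫ ω, X ω ∂μ = γ := by
    have h := mom1 γ (Real.toNNReal (σ ^ 2))
    have hm : AEStronglyMeasurable (fun x : ℝ => x) (Measure.map X μ) :=
      measurable_id.aestronglyMeasurable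
    rw [← hX, integral_map hXae hm] at h
    exact h
  have mX2 : ∫ ω, X ω ^ 2 ∂μ = γ ^ 2 + σ ^ 2 := by
    have h := mom2 γ (Real.toNNReal (σ ^ 2))
    have hm : AEStronglyMeasurable (fun x : ℝ => x ^ 2) (Measure.map X μ) :=
      (measurable_id.pow_const 2).aestronglyMeasurable
    rw [← hX, integral_map hXae hm, cσ] at h
    exact h
  have mX3 : ∫ ω, X ω ^ 3 ∂μ = γ ^ 3 + 3 * γ * σ ^ 2 := by
    have h := mom3 γ (Real.toNNReal (σ ^ 2))
    have hm : AEStronglyMeasurable (fun x : ℝ => x ^ 3) (Measure.map X μ) :=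
      (measurable_id.pow_const 3).aestronglyMeasurable
    rw [← hX, integral_map hXae hm, cσ] at h
    exact h
  have mX4 : ∫ ω, X ω ^ 4 ∂μ = γ ^ 4 + 6 * γ ^ 2 * σ ^ 2 + 3 * (σ ^ 2) ^ 2 := by
    have h := mom4 γ (Real.toNNReal (σ ^ 2))
    have hm : AEStronglyMeasurable (fun x : ℝ => x ^ 4) (Measure.map X μ) :=
      (measurable_id.pow_const 4).aestronglyMeasurable
    rw [← hX, integral_map hXae hm, cσ] at h
    exact h
  have mY1 : ∫ ω, Y ω ∂μ = γ * β := by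
    have h := mom1 (γ * β) (Real.toNNReal (s ^ 2))
    have hm : AEStronglyMeasurable (fun x : ℝ => x) (Measure.map Y μ) :=
      measurable_id.aestronglyMeasurable
    rw [← hY, integral_map hYae hm] at h
    exact h
  have mY2 : ∫ ω, Y ω ^ 2 ∂μ = (γ * β) ^ 2 + s ^ 2 := by
    have h := mom2 (γ * β) (Real.toNNReal (s ^ 2))
    have hm : AEStronglyMeasurable (fun x : ℝ => x ^ 2) (Measure.map Y μ) :=
      (measurable_id.pow_const 2).aestronglyMeasurable
    rw [← hY, integral_map hYae hm, cs] at h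
    exact h
  -- integrability
  have iX : ∀ n : ℕ, Integrable (fun ω => X ω ^ n) μ := by
    intro n
    have h := int_pow_gauss γ (Real.toNNReal (σ ^ 2)) n
    rw [← hX] at h
    exact (integrable_map_measure (measurable_id.pow_const n).aestronglyMeasurable hXae).mp h
  have iY : ∀ n : ℕ, Integrable (fun ω => Y ω ^ n) μ := by
    intro n
    have h := int_pow_gauss (γ * β) (Real.toNNReal (s ^ 2)) n
    rw [← hY] at h
    exact (integrable_map_measure (measurable_id.pow_const n).aestronglyMeasurable hYae).mp h
  have iX1 : Integrable X μ := by simpa using iX 1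
  have iY1 : Integrable Y μ := by simpa using iY 1
  -- independence of powers
  have hI22 : IndepFun (fun ω => X ω ^ 2) (fun ω => Y ω ^ 2) μ :=
    hindep.comp (measurable_id.pow_const 2) (measurable_id.pow_const 2)
  have hI31 : IndepFun (fun ω => X ω ^ 3) Y μ :=
    hindep.comp (measurable_id.pow_const 3) measurable_id
  have iXY : Integrable (fun ω => X ω * Y ω) μ := hindep.integrable_mul iX1 iY1
  have iX2Y2 : Integrable (fun ω => X ω ^ 2 * Y ω ^ 2) μ :=
    hI22.integrable_mul (iX 2) (iY 2)
  have iX3Y : Integrable (fun ω => X ω ^ 3 * Y ω) μ := hI31.integrable_mul (iX 3) iY1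
  -- the centered variable
  set W : Ω → ℝ := fun ω => X ω * Y ω - X ω ^ 2 * β with hWdef
  have hWm : AEStronglyMeasurable W μ :=
    ((hXm.mul hYm).sub ((hXm.pow_const 2).mul_const β)).aestronglyMeasurable
  have iW : Integrable W μ := iXY.sub ((iX 2).mul_const β)
  have expand : (fun ω => W ω ^ 2)
      = fun ω => (X ω ^ 2 * Y ω ^ 2 - (2 * β) * (X ω ^ 3 * Y ω)) + β ^ 2 * X ω ^ 4 := by
    funext ω; rw [hWdef]; ring
  have iW2 : Integrable (fun ω => W ω ^ 2) μ := by
    rw [expand]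
    exact (iX2Y2.sub (iX3Y.const_mul _)).add ((iX 4).const_mul _)
  have hW2 : MemLp W 2 μ := (memLp_two_iff_integrable_sq hWm).mpr iW2
  -- expectations of W and W^2
  have EW : ∫ ω, W ω ∂μ = -(σ ^ 2 * β) := by
    rw [hWdef]
    have iD : Integrable (fun ω => X ω ^ 2 * β) μ := (iX 2).mul_const β
    rw [integral_sub iXY iD, integral_mul_const,
      hindep.integral_fun_mul_eq_mul_integral hXm.aestronglyMeasurable hYm.aestronglyMeasurable, mX1, mY1, mX2]
    ring
  have EW2 : ∫ ω, W ω ^ 2 ∂μ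
      = (γ ^ 2 + σ ^ 2) * ((γ * β) ^ 2 + s ^ 2)
        - 2 * β * ((γ ^ 3 + 3 * γ * σ ^ 2) * (γ * β))
        + β ^ 2 * (γ ^ 4 + 6 * γ ^ 2 * σ ^ 2 + 3 * (σ ^ 2) ^ 2) := by
    have iC : Integrable (fun ω => (2 * β) * (X ω ^ 3 * Y ω)) μ := iX3Y.const_mul _
    have iA : Integrable (fun ω => X ω ^ 2 * Y ω ^ 2 - (2 * β) * (X ω ^ 3 * Y ω)) μ :=
      iX2Y2.sub iC
    have iB : Integrable (fun ω => β ^ 2 * X ω ^ 4) μ := (iX 4).const_mul _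
    rw [expand, integral_add iA iB,
      integral_sub iX2Y2 iC, integral_const_mul, integral_const_mul,
      hI22.integral_fun_mul_eq_mul_integral (hXm.pow_const 2).aestronglyMeasurable
        (hYm.pow_const 2).aestronglyMeasurable,
      hI31.integral_fun_mul_eq_mul_integral (hXm.pow_const 3).aestronglyMeasurable hYm.aestronglyMeasurable,
      mX2, mY2, mX3, mX4, mY1]
  -- reduce to variance of W
  have hfun : (fun ω => (X ω * Y ω - X ω ^ 2 * β) / s ^ 2)
      = fun ω => (s ^ 2)⁻¹ * W ω := by
    funext ω; rw [hWdef]; ring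
  rw [hfun, variance_const_mul, variance_eq_sub hW2]
  have hμW2 : μ[W ^ 2] = ∫ ω, W ω ^ 2 ∂μ := rfl
  have hμW : μ[W] = ∫ ω, W ω ∂μ := rfl
  rw [hμW2, hμW, EW2, EW]
  field_simp
  ring
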